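/- Let T > 0, ε ∈ (0,1), and let ũ : [-1,1] → ℝ be a C¹ function with ũ(x) ∈ [1-ε, 1+ε] for x < -ε and ũ(x) ∈ [-1-ε, -1+ε] for x > ε. Then the L² norm of the Burgers residual (u²/2)_x = ũ ũ_x over (0,T) × (-1,1) is at least √T (1-ε)² / (2√ε). In particular, it tends to infinity as ε → 0. -/

import Mathlib

/-- The L² norm of the Burgers residual of a time-independent
smoothed standing-shock profile over `(0,T) × (-1,1)` is at least
`√T (1-ε)² / (2√ε)`, which blows up as `ε → 0`. -/
theorem stmt_1 (T ε : ℝ) (hT : 0 < T) (hε : ε ∈ Set.Ioo (0:ℝ) 1)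
    (u : ℝ → ℝ) (hu : ContDiff ℝ 1 u)
    (hleft : ∀ x ∈ Set.Icc (-1:ℝ) 1, x < -ε → u x ∈ Set.Icc (1 - ε) (1 + ε))
    (hright : ∀ x ∈ Set.Icc (-1:ℝ) 1, ε < x → u x ∈ Set.Icc (-1 - ε) (-1 + ε)) :
    Real.sqrt T * (1 - ε)^2 / (2 * Real.sqrt ε) ≤
      Real.sqrt (∫ _t in (0:ℝ)..T, ∫ x in (-1:ℝ)..1,
        (deriv (fun y => (u y)^2 / 2) x)^2) := by
  obtain ⟨hε0, hε1⟩ := hε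
  set g : ℝ → ℝ := fun y => (u y)^2 / 2 with hgdef
  have hg : ContDiff ℝ 1 g := (hu.pow 2).div_const 2
  have hgc : Continuous (deriv g) := hg.continuous_deriv le_rfl
  have hgd : Differentiable ℝ g := hg.differentiable one_ne_zero
  set f : ℝ → ℝ := deriv g with hfdef
  have huc : Continuous u := hu.continuous
  -- boundary values
  have hune : 1 - ε ≤ u (-ε) := by
    have h1 : Filter.Tendsto u (nhdsWithin (-ε) (Set.Iio (-ε))) (nhds (u (-ε))) :=
      (huc.continuousAt).continuousWithinAt
    refine ge_of_tendsto h1 ?_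
    filter_upwards [Ioo_mem_nhdsLT_of_mem (⟨by linarith, le_rfl⟩ : -ε ∈ Set.Ioc (-1:ℝ) (-ε))]
      with x hx
    exact (hleft x ⟨le_of_lt hx.1, by linarith [hx.2]⟩ hx.2).1
  have hupe : u ε ≤ -1 + ε := by
    have h1 : Filter.Tendsto u (nhdsWithin ε (Set.Ioi ε)) (nhds (u ε)) :=
      (huc.continuousAt).continuousWithinAt
    refine le_of_tendsto h1 ?_
    filter_upwards [Ioo_mem_nhdsGT_of_mem (⟨le_rfl, hε1⟩ : ε ∈ Set.Ico ε (1:ℝ))]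
      with x hx
    exact (hright x ⟨by linarith [hx.1], le_of_lt hx.2⟩ hx.1).2
  have hgne : (1 - ε)^2 / 2 ≤ g (-ε) := by
    have : (1 - ε)^2 ≤ (u (-ε))^2 := by nlinarith
    simp only [hgdef]; linarith
  have hgpe : (1 - ε)^2 / 2 ≤ g ε := by
    have : (1 - ε)^2 ≤ (u ε)^2 := by nlinarith
    simp only [hgdef]; linarith
  -- zero of u in [-ε, ε]
  have hεε : (-ε : ℝ) ≤ ε := by linarith
  obtain ⟨x0, hx0mem, hx0⟩ : ∃ x0 ∈ Set.Icc (-ε) ε, u x0 = 0 := by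
    have := intermediate_value_Icc' hεε huc.continuousOn
    have h0 : (0:ℝ) ∈ Set.Icc (u ε) (u (-ε)) := ⟨by linarith, by linarith⟩
    obtain ⟨x0, hx0m, hx0⟩ := this h0
    exact ⟨x0, hx0m, hx0⟩
  have hgx0 : g x0 = 0 := by simp [hgdef, hx0]
  -- integrability
  have hIf : ∀ a b : ℝ, IntervalIntegrable f MeasureTheory.volume a b :=
    fun a b => hgc.intervalIntegrable a b
  have hIfa : ∀ a b : ℝ, IntervalIntegrable (fun x => |f x|) MeasureTheory.volume a b :=
    fun a b => (hgc.abs).intervalIntegrable a b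
  have hIf2 : ∀ a b : ℝ, IntervalIntegrable (fun x => (f x)^2) MeasureTheory.volume a b :=
    fun a b => (hgc.pow 2).intervalIntegrable a b
  -- FTC
  have hftc : ∀ a b : ℝ, ∫ x in a..b, f x = g b - g a := fun a b =>
    intervalIntegral.integral_deriv_eq_sub (fun x _ => hgd x) (hIf a b)
  -- L1 lower bounds
  have hx0l := hx0mem.1
  have hx0r := hx0mem.2
  have hA1 : (1 - ε)^2 / 2 ≤ ∫ x in (-ε)..x0, |f x| := by
    have h1 : |∫ x in (-ε)..x0, f x| ≤ ∫ x in (-ε)..x0, |f x| :=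
      intervalIntegral.abs_integral_le_integral_abs hx0l
    rw [hftc, hgx0] at h1
    calc (1 - ε)^2 / 2 ≤ |0 - g (-ε)| := by
          rw [zero_sub, abs_neg]; exact le_trans hgne (le_abs_self _)
      _ ≤ _ := h1
  have hA2 : (1 - ε)^2 / 2 ≤ ∫ x in x0..ε, |f x| := by
    have h1 : |∫ x in x0..ε, f x| ≤ ∫ x in x0..ε, |f x| :=
      intervalIntegral.abs_integral_le_integral_abs hx0r
    rw [hftc, hgx0] at h1
    calc (1 - ε)^2 / 2 ≤ |g ε - 0| := by
          rw [sub_zero]; exact le_trans hgpe (le_abs_self _)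
      _ ≤ _ := h1
  have hL1 : (1 - ε)^2 ≤ ∫ x in (-ε)..ε, |f x| := by
    have := intervalIntegral.integral_add_adjacent_intervals (hIfa (-ε) x0) (hIfa x0 ε)
    rw [← this]
    linarith
  -- pointwise AM-GM with c
  set c : ℝ := (1 - ε)^2 / (2 * ε) with hcdef
  have hc0 : 0 < c := by
    apply div_pos (by nlinarith) (by linarith)
  have hpt : ∀ x ∈ Set.Icc (-ε) ε, |f x| ≤ (f x)^2 / (2 * c) + c / 2 := by
    intro x _
    have h1 : 0 ≤ (|f x| - c)^2 := sq_nonneg _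
    have h2 : |f x|^2 = (f x)^2 := sq_abs _
    rw [div_add_div _ _ (by positivity) (by norm_num : (2:ℝ) ≠ 0), le_div_iff₀ (by positivity)]
    nlinarith
  have hmono : (∫ x in (-ε)..ε, |f x|) ≤ ∫ x in (-ε)..ε, ((f x)^2 / (2 * c) + c / 2) := by
    apply intervalIntegral.integral_mono_on hεε (hIfa _ _) _ hpt
    exact ((hIf2 (-ε) ε).div_const _).add intervalIntegrable_const
  have hrhs : (∫ x in (-ε)..ε, ((f x)^2 / (2 * c) + c / 2))
      = (∫ x in (-ε)..ε, (f x)^2) / (2 * c) + ε * c := by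
    rw [intervalIntegral.integral_add ((hIf2 (-ε) ε).div_const _) intervalIntegrable_const,
      intervalIntegral.integral_div, intervalIntegral.integral_const]
    simp
    ring
  have hεc : ε * c = (1 - ε)^2 / 2 := by
    rw [hcdef]; field_simp
  have hI2 : (1 - ε)^4 / (2 * ε) ≤ ∫ x in (-ε)..ε, (f x)^2 := by
    have h1 : (1 - ε)^2 ≤ (∫ x in (-ε)..ε, (f x)^2) / (2 * c) + (1 - ε)^2 / 2 := by
      rw [← hεc, ← hrhs]; linarith
    have h2 : (1 - ε)^2 / 2 * (2 * c) ≤ ∫ x in (-ε)..ε, (f x)^2 := by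
      rw [← le_div_iff₀ (by positivity)]; linarith
    calc (1 - ε)^4 / (2 * ε) = (1 - ε)^2 / 2 * (2 * c) := by
          rw [hcdef]; field_simp
      _ ≤ _ := h2
  -- extend to [-1,1]
  have hI : (1 - ε)^4 / (2 * ε) ≤ ∫ x in (-1:ℝ)..1, (f x)^2 := by
    have hs1 := intervalIntegral.integral_add_adjacent_intervals (hIf2 (-1) (-ε)) (hIf2 (-ε) 1)
    have hs2 := intervalIntegral.integral_add_adjacent_intervals (hIf2 (-ε) ε) (hIf2 ε 1)
    have hn1 : 0 ≤ ∫ x in (-1:ℝ)..(-ε), (f x)^2 :=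
      intervalIntegral.integral_nonneg (by linarith) (fun x _ => sq_nonneg _)
    have hn2 : 0 ≤ ∫ x in ε..(1:ℝ), (f x)^2 :=
      intervalIntegral.integral_nonneg (by linarith) (fun x _ => sq_nonneg _)
    rw [← hs1, ← hs2]
    linarith
  -- double integral
  set I : ℝ := ∫ x in (-1:ℝ)..1, (f x)^2 with hIdef
  have hIpos : 0 < I := lt_of_lt_of_le (div_pos (pow_pos (by linarith) 4) (by linarith)) hI
  have hdouble : (∫ _t in (0:ℝ)..T, ∫ x in (-1:ℝ)..1,
      (deriv (fun y => (u y)^2 / 2) x)^2) = T * I := by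
    rw [intervalIntegral.integral_const]
    simp [hIdef, hfdef, hgdef]
  have heq : Real.sqrt T * (1 - ε)^2 / (2 * Real.sqrt ε)
      = Real.sqrt (T * ((1 - ε)^4 / (4 * ε))) := by
    rw [show T * ((1 - ε)^4 / (4 * ε)) = T * ((1 - ε)^2 / (2 * Real.sqrt ε))^2 from ?_,
      Real.sqrt_mul hT.le, Real.sqrt_sq (by positivity)]
    · ring
    · rw [div_pow, mul_pow, Real.sq_sqrt hε0.le]
      ring
  rw [hdouble, heq]
  apply Real.sqrt_le_sqrt
  have hle : (1 - ε)^4 / (4 * ε) ≤ I := by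
    calc (1 - ε)^4 / (4 * ε) ≤ (1 - ε)^4 / (2 * ε) := by
          apply div_le_div_of_nonneg_left (by positivity) (by linarith) (by linarith)
      _ ≤ I := hI
  exact mul_le_mul_of_nonneg_left hle hT.le
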